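/- Let κ₁, κ₂ be real numbers with κ₁ ≥ 0 and κ₁ ≥ κ₂, and define f(x) = x · ln(1 − κ₁ + (κ₁ − κ₂)/x). Then f is concave on the set S = {x ∈ ℝ : x > 0 and x·(1 − κ₁) + κ₁ − κ₂ > 0}. -/

import Mathlib

/-- Proposition 2: concavity of the time-sharing objective. -/
theorem objective_concave
    (κ₁ κ₂ : ℝ) (hκ₁ : 0 ≤ κ₁) (hκ : κ₂ ≤ κ₁) :
    ConcaveOn ℝ {x : ℝ | 0 < x ∧ 0 < x * (1 - κ₁) + κ₁ - κ₂}
      (fun x : ℝ => x * Real.log (1 - κ₁ + (κ₁ - κ₂) / x)) := by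
  set S : Set ℝ := {x : ℝ | 0 < x ∧ 0 < x * (1 - κ₁) + κ₁ - κ₂} with hS
  have hopen : IsOpen S := by
    have h1 : IsOpen {x : ℝ | 0 < x} := isOpen_lt continuous_const continuous_id
    have h2 : IsOpen {x : ℝ | 0 < x * (1 - κ₁) + κ₁ - κ₂} :=
      isOpen_lt continuous_const (by continuity)
    have : S = {x : ℝ | 0 < x} ∩ {x : ℝ | 0 < x * (1 - κ₁) + κ₁ - κ₂} := rfl
    rw [this]; exact h1.inter h2
  have hint : interior S = S := hopen.interior_eq
  have hconv : Convex ℝ S := by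
    intro x hx y hy p q hp hq hpq
    obtain ⟨hx1, hx2⟩ := hx
    obtain ⟨hy1, hy2⟩ := hy
    simp only [smul_eq_mul, Set.mem_setOf_eq, hS]
    have haux : ∀ u v : ℝ, 0 < u → 0 < v → 0 < p * u + q * v := by
      intro u v hu hv
      rcases lt_or_eq_of_le hp with h | h
      · nlinarith [mul_nonneg hq hv.le, mul_pos h hu]
      · have hq1 : q = 1 := by linarith
        rw [← h, hq1]; simpa using hv
    constructor
    · exact haux x y hx1 hy1
    · have e : (p * x + q * y) * (1 - κ₁) + κ₁ - κ₂
          = p * (x * (1 - κ₁) + κ₁ - κ₂) + q * (y * (1 - κ₁) + κ₁ - κ₂) := by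
        have hq1 : q = 1 - p := by linarith
        rw [hq1]; ring
      rw [e]; exact haux _ _ hx2 hy2
  set f' : ℝ → ℝ := fun x => Real.log (1 - κ₁ + (κ₁ - κ₂) / x)
      - (κ₁ - κ₂) / (x * (1 - κ₁) + κ₁ - κ₂) with hf'def
  set f'' : ℝ → ℝ := fun x => -(κ₁ - κ₂) ^ 2 / (x * (x * (1 - κ₁) + κ₁ - κ₂) ^ 2) with hf''def
  have key : ∀ x ∈ S, HasDerivAt (fun x : ℝ => x * Real.log (1 - κ₁ + (κ₁ - κ₂) / x)) (f' x) x := by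
    intro x hx
    obtain ⟨hx1, hx2⟩ := hx
    have hx0 : x ≠ 0 := ne_of_gt hx1
    have hg0 : x * (1 - κ₁) + κ₁ - κ₂ ≠ 0 := ne_of_gt hx2
    have hrw : 1 - κ₁ + (κ₁ - κ₂) / x = (x * (1 - κ₁) + κ₁ - κ₂) / x := by
      field_simp; ring
    have hhpos : 0 < 1 - κ₁ + (κ₁ - κ₂) / x := by rw [hrw]; positivity
    have hh : HasDerivAt (fun x : ℝ => 1 - κ₁ + (κ₁ - κ₂) / x)
        ((0 * x - (κ₁ - κ₂) * 1) / x ^ 2) x :=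
      ((hasDerivAt_const x (κ₁ - κ₂)).div (hasDerivAt_id x) hx0).const_add (1 - κ₁)
    have := (hasDerivAt_id x).mul (hh.log (ne_of_gt hhpos))
    convert this using 1
    case e'_4 => rfl
    case e'_5 => rfl
    case e'_8 => rfl
    rw [hf'def]
    simp only [one_mul, id_eq]
    rw [sub_eq_add_neg]
    congr 1
    rw [hrw]
    field_simp
    ring
  have key2 : ∀ x ∈ S, HasDerivAt f' (f'' x) x := by
    intro x hx
    obtain ⟨hx1, hx2⟩ := hx
    have hx0 : x ≠ 0 := ne_of_gt hx1
    have hg0 : x * (1 - κ₁) + κ₁ - κ₂ ≠ 0 := ne_of_gt hx2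
    have hrw : 1 - κ₁ + (κ₁ - κ₂) / x = (x * (1 - κ₁) + κ₁ - κ₂) / x := by
      field_simp; ring
    have hhpos : 0 < 1 - κ₁ + (κ₁ - κ₂) / x := by rw [hrw]; positivity
    have hh : HasDerivAt (fun x : ℝ => 1 - κ₁ + (κ₁ - κ₂) / x)
        ((0 * x - (κ₁ - κ₂) * 1) / x ^ 2) x :=
      ((hasDerivAt_const x (κ₁ - κ₂)).div (hasDerivAt_id x) hx0).const_add (1 - κ₁)
    have hg : HasDerivAt (fun x : ℝ => x * (1 - κ₁) + κ₁ - κ₂) (1 * (1 - κ₁)) x := by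
      have := (((hasDerivAt_id x).mul_const (1 - κ₁)).add_const κ₁).sub_const κ₂
      simpa using this
    have hq : HasDerivAt (fun x : ℝ => (κ₁ - κ₂) / (x * (1 - κ₁) + κ₁ - κ₂))
        ((0 * (x * (1 - κ₁) + κ₁ - κ₂) - (κ₁ - κ₂) * (1 * (1 - κ₁)))
          / (x * (1 - κ₁) + κ₁ - κ₂) ^ 2) x :=
      (hasDerivAt_const x (κ₁ - κ₂)).div hg hg0
    have := (hh.log (ne_of_gt hhpos)).sub hq
    convert this using 1
    case e'_4 => rfl
    case e'_5 => rfl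
    case e'_8 => rfl
    rw [hf''def]
    rw [hrw]
    field_simp
    ring
  refine concaveOn_of_hasDerivWithinAt2_nonpos hconv
    (fun x hx => (key x hx).continuousAt.continuousWithinAt)
    (fun x hx => ((key x (hint ▸ hx)).hasDerivWithinAt))
    (fun x hx => ((key2 x (hint ▸ hx)).hasDerivWithinAt))
    (fun x hx => ?_)
  rw [hint] at hx
  obtain ⟨hx1, hx2⟩ := hx
  have hden : 0 ≤ x * (x * (1 - κ₁) + κ₁ - κ₂) ^ 2 := by positivity
  exact div_nonpos_of_nonpos_of_nonneg (neg_nonpos_of_nonneg (sq_nonneg _)) hden
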